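/- Let A be a finite set of hyperplanes in ℝ^n, each defined by an affine functional f_H with rational coefficients, such that A is essential, and let ε : A → ℚ_{>0}. Let V ⊆ ℂ^n be the set of critical points of the master function Φ(x) = ∑_H ε_H log f_H(x) on the complement of the complexified arrangement. If every critical point is real (as guaranteed by Varchenko's theorem), then every critical point has coordinates that are totally real algebraic numbers, i.e., algebraic numbers all of whose Galois conjugates over ℚ are real. -/

import Mathlib

open Cardinal

noncomputable section

private lemma extend_hom_of_countable {F K L : Type} [Field F] [Field K] [Field L]
    [Countable F] [Algebra F K] [Algebra F L] [IsAlgClosed K] [IsAlgClosed L]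
    (hK : ℵ₀ < #K) (hKL : #K = #L) :
    ∃ σ : K →+* L, ∀ a : F, σ (algebraMap F K a) = algebraMap F L a := by
  obtain ⟨s, hs⟩ := exists_isTranscendenceBasis F K
  obtain ⟨t, ht⟩ := exists_isTranscendenceBasis F L
  have hF : #F ≤ ℵ₀ := Cardinal.mk_le_aleph0
  have h1 : #K = #s := IsAlgClosed.cardinal_eq_cardinal_transcendence_basis_of_aleph0_lt' _ hs hF hK
  have h2 : #L = #t := IsAlgClosed.cardinal_eq_cardinal_transcendence_basis_of_aleph0_lt' _ ht hF
    (hKL ▸ hK)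
  have : #(s : Set K) = #(t : Set L) := by rw [← h1, ← h2, hKL]
  obtain ⟨e⟩ := Cardinal.eq.1 this
  letI := IsAlgClosed.isAlgClosure_of_transcendence_basis _ hs
  letI := IsAlgClosed.isAlgClosure_of_transcendence_basis _ ht
  let e' : Algebra.adjoin F (Set.range ((↑) : s → K)) ≃ₐ[F]
      Algebra.adjoin F (Set.range ((↑) : t → L)) :=
    (hs.1.aevalEquiv.symm.trans (MvPolynomial.renameEquiv F e)).trans ht.1.aevalEquiv
  refine ⟨(IsAlgClosure.equivOfEquiv K L e'.toRingEquiv : K ≃+* L), fun a => ?_⟩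
  have h3 : algebraMap F K a =
      algebraMap (Algebra.adjoin F (Set.range ((↑) : s → K))) K (algebraMap F _ a) := by
    rw [← IsScalarTower.algebraMap_apply]
  rw [h3]
  refine (IsAlgClosure.equivOfEquiv_algebraMap K L e'.toRingEquiv _).trans ?_
  show algebraMap _ L (e' (algebraMap F _ a)) = _
  rw [AlgEquiv.commutes, ← IsScalarTower.algebraMap_apply]

private lemma exists_endo_of_countable_field (x y : ℂ) (F : Type) [Field F] [Countable F]
    (f g : F →+* ℂ) (t : F) (hf : f t = x) (hg : g t = y) :
    ∃ σ : ℂ →+* ℂ, σ x = y := by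
  obtain ⟨σ, hσ⟩ := @extend_hom_of_countable F ℂ ℂ _ _ _ _ f.toAlgebra g.toAlgebra _ _
    (by rw [mk_complex]; exact aleph0_lt_continuum) rfl
  refine ⟨σ, ?_⟩
  have := hσ t
  rwa [@RingHom.algebraMap_toAlgebra F ℂ _ _ f, @RingHom.algebraMap_toAlgebra F ℂ _ _ g,
    hf, hg] at this

end

/-- For an essential real arrangement defined over `ℚ` with positive
rational weights, if every critical point of the master function is real, then every
coordinate of every critical point is a totally real algebraic number (all of whose
Galois conjugates over `ℚ` are real). -/
theorem master_function_critical_points_totally_real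
    (n : ℕ) (ι : Type*) [Fintype ι]
    (a : ι → Fin n → ℚ) (b : ι → ℚ)
    (hess : Submodule.span ℚ (Set.range a) = ⊤)
    (ε : ι → ℚ) (hε : ∀ H : ι, 0 < ε H)
    (crit : (Fin n → ℂ) → Prop)
    (hcrit : ∀ z, crit z ↔
      ((∀ H : ι, (∑ i, (a H i : ℂ) * z i) + (b H : ℂ) ≠ 0) ∧
       ∀ i : Fin n, ∑ H : ι, (ε H : ℂ) * (a H i : ℂ) /
          ((∑ i', (a H i' : ℂ) * z i') + (b H : ℂ)) = 0))
    (hreal : ∀ z, crit z → ∀ i : Fin n, (z i).im = 0) :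
    ∀ z, crit z → ∀ i : Fin n,
      IsAlgebraic ℚ (z i) ∧
        ∀ w : ℂ, Polynomial.aeval w (minpoly ℚ (z i)) = 0 → w.im = 0 := by
  -- Every ring endomorphism of `ℂ` maps critical points to critical points.
  have hmap : ∀ σ : ℂ →+* ℂ, ∀ z, crit z → crit (fun j => σ (z j)) := by
    intro σ z hz
    rw [hcrit] at hz ⊢
    obtain ⟨h1, h2⟩ := hz
    have e1 : ∀ H : ι, (∑ i, (a H i : ℂ) * σ (z i)) + (b H : ℂ) =
        σ ((∑ i', (a H i' : ℂ) * z i') + (b H : ℂ)) := by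
      intro H
      simp [map_add, map_sum, map_mul, map_ratCast]
    constructor
    · intro H hEq
      apply h1 H
      apply σ.injective
      rw [← e1 H, hEq, map_zero]
    · intro i
      have := congrArg σ (h2 i)
      rw [map_zero, map_sum] at this
      rw [← this]
      refine Finset.sum_congr rfl fun H _ => ?_
      rw [map_div₀, map_mul, map_ratCast, map_ratCast, e1 H]
  intro z hz i
  have halg : IsAlgebraic ℚ (z i) := by
    by_contra htr
    have htr' : Transcendental ℚ (z i) := htr
    -- `z i + I` is also transcendental
    have hI : IsIntegral ℚ Complex.I := by
      refine ⟨Polynomial.X ^ 2 + 1, ?_, ?_⟩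
      · apply Polynomial.monic_X_pow_add
        simpa using Polynomial.degree_one_le
      · simp [Complex.I_sq]
    have htr2 : Transcendental ℚ (z i + Complex.I) := by
      intro h
      apply htr'
      have : IsIntegral ℚ ((z i + Complex.I) - Complex.I) := (h.isIntegral).sub hI
      simp only [add_sub_cancel_right] at this
      exact this.isAlgebraic
    -- Build a countable field mapping into `ℂ` two ways
    haveI : Countable (AddMonoidAlgebra ℚ ℕ) :=
      Function.Injective.countable (AddMonoidAlgebra.coeff_injective (R := ℚ) (M := ℕ))
    haveI : Countable (Polynomial ℚ) :=
      Function.Injective.countable (Polynomial.toFinsupp_injective (R := ℚ))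
    have hcnt : Countable (FractionRing (Polynomial ℚ)) := by
      have hsurj : Function.Surjective
          (fun p : Polynomial ℚ × (nonZeroDivisors (Polynomial ℚ)) =>
            IsLocalization.mk' (FractionRing (Polynomial ℚ)) p.1 p.2) := by
        intro w
        obtain ⟨⟨x, y⟩, h⟩ := IsLocalization.mk'_surjective (nonZeroDivisors (Polynomial ℚ)) w
        exact ⟨(x, y), h⟩
      exact hsurj.countable
    have hfinj : Function.Injective (Polynomial.aeval (z i) : Polynomial ℚ →ₐ[ℚ] ℂ) :=
      transcendental_iff_injective.mp htr'
    have hginj : Function.Injective (Polynomial.aeval (z i + Complex.I) : Polynomial ℚ →ₐ[ℚ] ℂ) :=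
      transcendental_iff_injective.mp htr2
    obtain ⟨σ, hσ⟩ := exists_endo_of_countable_field (z i) (z i + Complex.I)
      (FractionRing (Polynomial ℚ))
      (IsFractionRing.lift (g := (Polynomial.aeval (z i) : Polynomial ℚ →ₐ[ℚ] ℂ).toRingHom) hfinj)
      (IsFractionRing.lift
        (g := (Polynomial.aeval (z i + Complex.I) : Polynomial ℚ →ₐ[ℚ] ℂ).toRingHom) hginj)
      (algebraMap (Polynomial ℚ) (FractionRing (Polynomial ℚ)) Polynomial.X)
      (by rw [IsFractionRing.lift_algebraMap]; simp)
      (by rw [IsFractionRing.lift_algebraMap]; simp)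
    have hcrit' := hmap σ z hz
    have him := hreal _ hcrit' i
    simp only [hσ] at him
    have hzi : (z i).im = 0 := hreal z hz i
    rw [Complex.add_im, hzi, Complex.I_im] at him
    norm_num at him
  refine ⟨halg, fun w hw => ?_⟩
  haveI : Fact (Irreducible (minpoly ℚ (z i))) := ⟨minpoly.irreducible halg.isIntegral⟩
  haveI : Countable (AddMonoidAlgebra ℚ ℕ) :=
      Function.Injective.countable (AddMonoidAlgebra.coeff_injective (R := ℚ) (M := ℕ))
  haveI : Countable (Polynomial ℚ) :=
    Function.Injective.countable (Polynomial.toFinsupp_injective (R := ℚ))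
  have hcnt : Countable (AdjoinRoot (minpoly ℚ (z i))) :=
    Function.Surjective.countable
      (AdjoinRoot.mk_surjective : Function.Surjective (AdjoinRoot.mk (minpoly ℚ (z i))))
  obtain ⟨σ, hσ⟩ := exists_endo_of_countable_field (z i) w (AdjoinRoot (minpoly ℚ (z i)))
    (AdjoinRoot.lift (algebraMap ℚ ℂ) (z i)
      (by rw [← Polynomial.aeval_def]; exact minpoly.aeval ℚ (z i)))
    (AdjoinRoot.lift (algebraMap ℚ ℂ) w (by rw [← Polynomial.aeval_def]; exact hw))
    (AdjoinRoot.root _) (AdjoinRoot.lift_root _) (AdjoinRoot.lift_root _)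
  have hcrit' := hmap σ z hz
  have him := hreal _ hcrit' i
  simpa [hσ] using him
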